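/- Let H be a closed subgroup of Z_2^× with H ∩ (1 + 4Z_2) = 1 + 2^k Z_2 for some finite k > 2. Then H is one of the following three subgroups: 1 + 2^k Z_2, the closed subgroup generated by 2^{k-1} - 1, or {±1} × (1 + 2^k Z_2). -/

import Mathlib

/-- The subgroup `{±1}` of `ℤ_[2]ˣ`. -/
def pmOne : Subgroup ℤ_[2]ˣ where
  carrier := {x : ℤ_[2]ˣ | x = 1 ∨ x = -1}
  one_mem' := Or.inl rfl
  mul_mem' := by
    rintro a b (rfl | rfl) (rfl | rfl) <;> simp
  inv_mem' := by
    rintro a (rfl | rfl) <;> simp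

/-- The subgroup `1 + 2^k ℤ_2` of `ℤ_[2]ˣ`, as the kernel of reduction modulo `2^k`. -/
noncomputable def onePlusTwoPow (k : ℕ) : Subgroup ℤ_[2]ˣ :=
  MonoidHom.ker (Units.map (PadicInt.toZModPow (p := 2) k).toMonoidHom)

open PadicInt

-- coercion of p for p = 2
lemma two_coe : ((2:ℕ) : ℤ_[2]) = 2 := by norm_cast

lemma norm_le_pow_iff (x : ℤ_[2]) (n : ℕ) :
    ‖x‖ ≤ (2:ℝ) ^ (-(n:ℤ)) ↔ (2:ℤ_[2]) ^ n ∣ x := by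
  have := PadicInt.norm_le_pow_iff_mem_span_pow (p := 2) x n
  rw [Ideal.mem_span_singleton] at this
  simpa [two_coe] using this

lemma norm_two_pow (n : ℕ) : ‖((2:ℤ_[2]) ^ n)‖ = (2:ℝ) ^ (-(n:ℤ)) := by
  have := PadicInt.norm_p_pow (p := 2) n
  simpa [two_coe] using this

lemma mem_onePlusTwoPow_iff (k : ℕ) (x : ℤ_[2]ˣ) :
    x ∈ onePlusTwoPow k ↔ ‖(x : ℤ_[2]) - 1‖ ≤ (2:ℝ) ^ (-(k:ℤ)) := by
  rw [onePlusTwoPow, MonoidHom.mem_ker, Units.ext_iff]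
  rw [norm_le_pow_iff, ← Ideal.mem_span_singleton]
  have hker := PadicInt.ker_toZModPow (p := 2) k
  rw [show ((2:ℤ_[2])^k) = ((2:ℕ):ℤ_[2])^k by rw [two_coe], ← hker, RingHom.mem_ker]
  simp only [Units.coe_map, RingHom.toMonoidHom_eq_coe, MonoidHom.coe_coe, Units.val_one]
  rw [map_sub, map_one, sub_eq_zero]

lemma toZMod_unit {x : ℤ_[2]} (hx : IsUnit x) : PadicInt.toZMod x = 1 := by
  have : IsUnit (PadicInt.toZMod x) := hx.map _
  revert this
  generalize PadicInt.toZMod x = z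
  revert z; decide

lemma two_dvd_of_units {x y : ℤ_[2]} (hx : IsUnit x) (hy : IsUnit y) : (2:ℤ_[2]) ∣ x + y := by
  have : PadicInt.toZMod (x + y) = 0 := by
    rw [map_add, toZMod_unit hx, toZMod_unit hy]; decide
  have hm : x + y ∈ RingHom.ker (PadicInt.toZMod (p := 2)) := this
  rw [PadicInt.ker_toZMod, PadicInt.maximalIdeal_eq_span_p, Ideal.mem_span_singleton] at hm
  rwa [two_coe] at hm

/-- key ultrametric improvement: sum of two elements of equal norm is divisible by an extra 2 -/
lemma norm_add_le_half {x y : ℤ_[2]} (h : ‖x‖ = ‖y‖) : ‖x + y‖ ≤ ‖x‖ / 2 := by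
  rcases eq_or_ne x 0 with rfl | hx
  · have : y = 0 := by simpa using h.symm
    simp [this]
  have hy : y ≠ 0 := by
    intro h0; rw [h0, norm_zero, norm_eq_zero] at h; exact hx h
  have hvxy : x.valuation = y.valuation := by
    have hx' := PadicInt.norm_eq_zpow_neg_valuation hx
    have hy' := PadicInt.norm_eq_zpow_neg_valuation hy
    rw [hx', hy'] at h
    have h2 : (1:ℝ) < (2:ℕ) := by norm_num
    have := zpow_right_injective₀ (by norm_num : (0:ℝ) < (2:ℕ)) (by norm_num) (by exact_mod_cast h)
    exact_mod_cast neg_injective this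
  obtain ⟨u, hu, hxu⟩ : ∃ u : ℤ_[2], IsUnit u ∧ x = u * 2 ^ x.valuation := by
    refine ⟨PadicInt.unitCoeff hx, Units.isUnit _, ?_⟩
    have := PadicInt.unitCoeff_spec hx
    rwa [two_coe] at this
  obtain ⟨v, hv, hyv⟩ : ∃ v : ℤ_[2], IsUnit v ∧ y = v * 2 ^ y.valuation := by
    refine ⟨PadicInt.unitCoeff hy, Units.isUnit _, ?_⟩
    have := PadicInt.unitCoeff_spec hy
    rwa [two_coe] at this
  obtain ⟨c, hc⟩ := two_dvd_of_units hu hv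
  rw [← hvxy] at hyv
  have hxy : x + y = 2 ^ x.valuation * (2 * c) := by
    conv_lhs => rw [hxu, hyv]
    rw [← hc]; ring
  rw [hxy, norm_mul, norm_mul]
  have hnu : ‖u‖ = 1 := PadicInt.isUnit_iff.mp hu
  have hx2 : ‖x‖ = ‖(2:ℤ_[2]) ^ x.valuation‖ := by
    conv_lhs => rw [hxu]
    rw [norm_mul, hnu, one_mul]
  rw [← hx2]
  have h2 : ‖(2:ℤ_[2])‖ = 1/2 := by
    have := PadicInt.norm_p (p := 2); rw [two_coe] at this; rw [this]; norm_num
  have hc1 : ‖c‖ ≤ 1 := PadicInt.norm_le_one c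
  have hx0 : 0 ≤ ‖x‖ := norm_nonneg x
  rw [h2]
  nlinarith

/-- dichotomy: a norm between `2^{-(n+1)}` (exclusive) and `2^{-n}` equals `2^{-n}`. -/
lemma norm_dichotomy {z : ℤ_[2]} {n : ℤ} (h1 : ‖z‖ ≤ (2:ℝ) ^ (-(n:ℤ)))
    (h2 : ¬ ‖z‖ ≤ (2:ℝ) ^ (-((n:ℤ)+1))) : ‖z‖ = (2:ℝ) ^ (-(n:ℤ)) := by
  have hz : z ≠ 0 := by
    rintro rfl
    exact h2 (by rw [norm_zero]; positivity)
  have hn := PadicInt.norm_eq_zpow_neg_valuation hz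
  have h2' : ((2:ℕ):ℝ) = (2:ℝ) := by norm_num
  rw [hn, h2'] at h1 h2 ⊢
  have hlt : (1:ℝ) < 2 := one_lt_two
  have hv1 : (n:ℤ) ≤ z.valuation := by
    have := (zpow_le_zpow_iff_right₀ hlt).mp h1
    linarith
  have hv2 : z.valuation < (n:ℤ) + 1 := by
    by_contra hcon
    push_neg at hcon
    exact h2 ((zpow_le_zpow_iff_right₀ hlt).mpr (by linarith))
  have : z.valuation = (n:ℤ) := by omega
  rw [this]

lemma norm_two : ‖(2:ℤ_[2])‖ = (2:ℝ) ^ (-(1:ℤ)) := by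
  have := PadicInt.norm_p (p := 2); rw [two_coe] at this; rw [this]; norm_num

lemma norm_add_one {y : ℤ_[2]} (h : ‖y - 1‖ ≤ (2:ℝ) ^ (-(2:ℤ))) :
    ‖y + 1‖ = (2:ℝ) ^ (-(1:ℤ)) := by
  have hne : ‖y - 1‖ ≠ ‖(2:ℤ_[2])‖ := by
    rw [norm_two]
    intro hcon; rw [hcon] at h; norm_num at h
  have : y + 1 = (y - 1) + 2 := by ring
  rw [this, PadicInt.norm_add_eq_max_of_ne hne, norm_two]
  rw [max_eq_right]
  calc ‖y-1‖ ≤ (2:ℝ)^(-(2:ℤ)) := h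
  _ ≤ (2:ℝ)^(-(1:ℤ)) := by norm_num

/-- squaring doubles closeness to 1 (adds one) -/
lemma norm_sq_sub_one {y : ℤ_[2]} {m : ℤ} (hm : 2 ≤ m) (h : ‖y - 1‖ = (2:ℝ) ^ (-m)) :
    ‖y ^ 2 - 1‖ = (2:ℝ) ^ (-(m+1)) := by
  have h2 : ‖y - 1‖ ≤ (2:ℝ) ^ (-(2:ℤ)) := by
    rw [h]; exact zpow_le_zpow_right₀ one_le_two (by omega)
  have h1 := norm_add_one h2
  have : y ^ 2 - 1 = (y - 1) * (y + 1) := by ring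
  rw [this, norm_mul, h, h1, ← zpow_add₀ (by norm_num : (2:ℝ) ≠ 0)]
  ring_nf

lemma norm_pow_two_pow {α : ℤ_[2]} {m : ℤ} (hm : 2 ≤ m) (h : ‖α - 1‖ = (2:ℝ) ^ (-m)) (j : ℕ) :
    ‖α ^ (2 ^ j) - 1‖ = (2:ℝ) ^ (-(m + j)) := by
  induction j with
  | zero => simpa using h
  | succ n ih =>
    have : α ^ (2 ^ (n+1)) = (α ^ (2 ^ n)) ^ 2 := by
      rw [← pow_mul, pow_succ]
    rw [this]
    have := norm_sq_sub_one (y := α ^ (2^n)) (m := m + n) (by omega) ih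
    rw [this]
    congr 1
    push_cast
    ring

lemma unit_mem_or_neg_mem (x : ℤ_[2]ˣ) : x ∈ onePlusTwoPow 2 ∨ -x ∈ onePlusTwoPow 2 := by
  rw [mem_onePlusTwoPow_iff, mem_onePlusTwoPow_iff, Units.val_neg]
  have h1 : (2:ℤ_[2]) ∣ (x:ℤ_[2]) - 1 := by
    have := two_dvd_of_units (x := (x:ℤ_[2])) (y := -1) x.isUnit isUnit_one.neg
    simpa [sub_eq_add_neg] using this
  have h2 : (2:ℤ_[2]) ∣ (x:ℤ_[2]) + 1 := by
    have := two_dvd_of_units (x := (x:ℤ_[2])) (y := 1) x.isUnit isUnit_one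
    simpa using this
  have hn1 : ‖(x:ℤ_[2]) - 1‖ ≤ (2:ℝ) ^ (-(1:ℤ)) := by
    have := (norm_le_pow_iff ((x:ℤ_[2]) - 1) 1).mpr (by simpa using h1)
    simpa using this
  have hn2 : ‖(x:ℤ_[2]) + 1‖ ≤ (2:ℝ) ^ (-(1:ℤ)) := by
    have := (norm_le_pow_iff ((x:ℤ_[2]) + 1) 1).mpr (by simpa using h2)
    simpa using this
  by_contra hcon
  obtain ⟨hc1, hc2⟩ := not_or.mp hcon
  have e1 : ‖(x:ℤ_[2]) - 1‖ = (2:ℝ) ^ (-(1:ℤ)) :=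
    norm_dichotomy hn1 (by intro hcon2; apply hc1; convert hcon2 using 2 <;> norm_num)
  have e2 : ‖(x:ℤ_[2]) + 1‖ = (2:ℝ) ^ (-(1:ℤ)) := by
    apply norm_dichotomy hn2
    intro hcon2; apply hc2
    have : -(x:ℤ_[2]) - 1 = -((x:ℤ_[2]) + 1) := by ring
    rw [this, norm_neg]
    convert hcon2 using 2 <;> norm_num
  have := norm_add_le_half (e1.trans e2.symm)
  have h2x : ((x:ℤ_[2]) - 1) + ((x:ℤ_[2]) + 1) = 2 * (x:ℤ_[2]) := by ring
  rw [h2x, norm_mul, norm_two, PadicInt.norm_units, e1] at this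
  norm_num at this

lemma dense_pow {α t : ℤ_[2]} {k : ℕ} (hk : 2 ≤ k) (hα1 : ‖α‖ = 1)
    (hα : ‖α - 1‖ = (2:ℝ) ^ (-(k:ℤ))) (ht : ‖t - 1‖ ≤ (2:ℝ) ^ (-(k:ℤ))) (m : ℕ) :
    ∃ n : ℕ, ‖α ^ n - t‖ ≤ (2:ℝ) ^ (-((k:ℤ) + m)) := by
  induction m with
  | zero => exact ⟨0, by simpa [norm_sub_rev] using ht⟩
  | succ m ih =>
    obtain ⟨n, hn⟩ := ih
    by_cases hcase : ‖α ^ n - t‖ ≤ (2:ℝ) ^ (-((k:ℤ) + (m+1:ℕ)))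
    · exact ⟨n, hcase⟩
    · have hex : ‖α ^ n - t‖ = (2:ℝ) ^ (-((k:ℤ)+m)) := by
        apply norm_dichotomy hn
        intro hcon; apply hcase
        convert hcon using 2 <;> (push_cast; ring)
      have hαs : ‖α ^ (2 ^ m) - 1‖ = (2:ℝ) ^ (-((k:ℤ)+m)) :=
        norm_pow_two_pow (by exact_mod_cast hk) hα m
      refine ⟨n + 2 ^ m, ?_⟩
      have hu : IsUnit α := PadicInt.isUnit_iff.mpr hα1
      have hαn : ‖α ^ n‖ = 1 := PadicInt.isUnit_iff.mp (hu.pow n)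
      have h1 : ‖α ^ n * (α ^ (2^m) - 1)‖ = (2:ℝ) ^ (-((k:ℤ)+m)) := by
        rw [norm_mul, hαn, one_mul, hαs]
      have heq : ‖α ^ n * (α ^ (2^m) - 1)‖ = ‖α ^ n - t‖ := by rw [h1, hex]
      have hhalf := norm_add_le_half heq
      have hsplit : α ^ n * (α ^ (2^m) - 1) + (α ^ n - t) = α ^ (n + 2^m) - t := by
        rw [pow_add]; ring
      rw [hsplit, h1] at hhalf
      calc ‖α ^ (n + 2^m) - t‖ ≤ (2:ℝ) ^ (-((k:ℤ)+m)) / 2 := hhalf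
        _ = (2:ℝ) ^ (-((k:ℤ) + (m+1:ℕ))) := by
            rw [div_eq_mul_inv, ← zpow_neg_one (2:ℝ), ← zpow_add₀ (by norm_num : (2:ℝ) ≠ 0)]
            congr 1; push_cast; ring

lemma unit_inv_sub_norm (x y : ℤ_[2]ˣ) :
    ‖((x⁻¹ : ℤ_[2]ˣ) : ℤ_[2]) - ((y⁻¹ : ℤ_[2]ˣ) : ℤ_[2])‖ = ‖(x : ℤ_[2]) - y‖ := by
  have key : ((x⁻¹ : ℤ_[2]ˣ) : ℤ_[2]) - ((y⁻¹ : ℤ_[2]ˣ) : ℤ_[2])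
      = ↑x⁻¹ * ((y : ℤ_[2]) - x) * ↑y⁻¹ := by
    have hx : ((x⁻¹ : ℤ_[2]ˣ) : ℤ_[2]) * x = 1 := x.inv_mul
    have hy : ((y : ℤ_[2]) * ↑y⁻¹) = 1 := y.mul_inv
    calc ((x⁻¹ : ℤ_[2]ˣ) : ℤ_[2]) - ↑y⁻¹
        = ↑x⁻¹ * ((y:ℤ_[2]) * ↑y⁻¹) - (↑x⁻¹ * x) * ↑y⁻¹ := by rw [hx, hy]; ring
      _ = ↑x⁻¹ * ((y : ℤ_[2]) - x) * ↑y⁻¹ := by ring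
  rw [key, norm_mul, norm_mul, PadicInt.norm_units, PadicInt.norm_units,
    one_mul, mul_one, norm_sub_rev]

lemma onePlusTwoPow_le_closure {u α : ℤ_[2]ˣ} {k : ℕ} (hk : 2 ≤ k)
    (hmem : α ∈ Subgroup.closure {u}) (hα : ‖(α : ℤ_[2]) - 1‖ = (2:ℝ) ^ (-(k:ℤ))) :
    onePlusTwoPow k ≤ (Subgroup.closure {u}).topologicalClosure := by
  intro t ht
  rw [mem_onePlusTwoPow_iff] at ht
  choose n hn using dense_pow hk (PadicInt.norm_units α) hα ht
  have hbound : Filter.Tendsto (fun m : ℕ => (2:ℝ) ^ (-((k:ℤ) + m))) Filter.atTop (nhds 0) := by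
    have h0 : Filter.Tendsto (fun m : ℕ => ((2:ℝ)^(-(k:ℤ))) * (1/2:ℝ)^m) Filter.atTop (nhds 0) := by
      have := tendsto_pow_atTop_nhds_zero_of_lt_one (by norm_num : (0:ℝ) ≤ 1/2) (by norm_num)
      simpa using this.const_mul ((2:ℝ)^(-(k:ℤ)))
    convert h0 using 2 with m
    rw [show ((1:ℝ)/2)^m = (2:ℝ)^(-(m:ℤ)) by rw [zpow_neg, zpow_natCast, one_div, inv_pow]]
    rw [← zpow_add₀ (by norm_num : (2:ℝ) ≠ 0)]
    congr 1; ring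
  have hval : Filter.Tendsto (fun m => ((α : ℤ_[2]) ^ (n m))) Filter.atTop (nhds (t : ℤ_[2])) := by
    rw [tendsto_iff_norm_sub_tendsto_zero]
    apply squeeze_zero (fun m => norm_nonneg _) (fun m => ?_) hbound
    exact hn m
  have hinv : Filter.Tendsto (fun m => (((α ^ (n m))⁻¹ : ℤ_[2]ˣ) : ℤ_[2])) Filter.atTop
      (nhds ((t⁻¹ : ℤ_[2]ˣ) : ℤ_[2])) := by
    rw [tendsto_iff_norm_sub_tendsto_zero]
    apply squeeze_zero (fun m => norm_nonneg _) (fun m => ?_) hbound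
    rw [unit_inv_sub_norm]
    simpa using hn m
  have htend : Filter.Tendsto (fun m => (α ^ (n m) : ℤ_[2]ˣ)) Filter.atTop (nhds t) := by
    rw [Units.isInducing_embedProduct.tendsto_nhds_iff]
    simp only [Function.comp_def, Units.embedProduct_apply]
    exact (hval.prodMk_nhds ((MulOpposite.continuous_op.tendsto _).comp hinv))
  rw [← SetLike.mem_coe, Subgroup.topologicalClosure_coe]
  exact mem_closure_of_tendsto htend
    (Filter.Eventually.of_forall fun m => Subgroup.pow_mem _ hmem _)

lemma norm_two_pow_sub_one {n : ℕ} (hn : 1 ≤ n) : ‖(2:ℤ_[2]) ^ n - 1‖ = 1 := by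
  rw [sub_eq_add_neg, PadicInt.norm_add_eq_max_of_ne]
  · rw [norm_neg, norm_one, max_eq_right]
    rw [norm_two_pow]
    calc (2:ℝ) ^ (-(n:ℤ)) ≤ (2:ℝ) ^ (0:ℤ) :=
          zpow_le_zpow_right₀ one_le_two (by omega)
      _ = 1 := by norm_num
  · rw [norm_neg, norm_one, norm_two_pow]
    have : (2:ℝ) ^ (-(n:ℤ)) < (2:ℝ) ^ (0:ℤ) :=
      zpow_lt_zpow_right₀ one_lt_two (by omega)
    simp only [zpow_zero] at this
    exact ne_of_lt this

/-- Let `H` be a closed subgroup of `ℤ_[2]ˣ` with `H ∩ (1 + 4ℤ_2) = 1 + 2^k ℤ_2` for some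
finite `k > 2`. Then `H` is one of: `1 + 2^k ℤ_2`, the closed subgroup generated by
`2^(k-1) - 1`, or `{±1} × (1 + 2^k ℤ_2)`. -/
theorem stmt_11 (k : ℕ) (hk : 2 < k) (H : Subgroup ℤ_[2]ˣ)
    (hH : IsClosed (H : Set ℤ_[2]ˣ))
    (hint : H ⊓ onePlusTwoPow 2 = onePlusTwoPow k) :
    H = onePlusTwoPow k ∨
    (∃ u : ℤ_[2]ˣ, (u : ℤ_[2]) = 2 ^ (k - 1) - 1 ∧
      H = (Subgroup.closure {u}).topologicalClosure) ∨
    H = pmOne ⊔ onePlusTwoPow k := by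
  by_cases hA : ∀ h ∈ H, h ∈ onePlusTwoPow 2
  · left
    rw [← hint]
    exact (inf_eq_left.mpr fun h hh => hA h hh).symm
  push_neg at hA
  obtain ⟨g, hgH, hg2⟩ := hA
  have honek_le : onePlusTwoPow k ≤ H := by rw [← hint]; exact inf_le_left
  have hone_k2 : ∀ x : ℤ_[2]ˣ, x ∈ H → x ∈ onePlusTwoPow 2 → x ∈ onePlusTwoPow k :=
    fun x hx h2 => by rw [← hint]; exact Subgroup.mem_inf.mpr ⟨hx, h2⟩
  -- norm facts about "negative" elements of H
  have hneg_norm : ∀ x : ℤ_[2]ˣ, x ∈ H → x ∉ onePlusTwoPow 2 →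
      ‖((-x : ℤ_[2]ˣ) : ℤ_[2]) - 1‖ ≤ (2:ℝ) ^ (-((k:ℤ) - 1)) ∧ -x ∈ onePlusTwoPow 2 := by
    intro x hx hx2
    have hnx2 : -x ∈ onePlusTwoPow 2 := (unit_mem_or_neg_mem x).resolve_left hx2
    have hxsq : x ^ 2 ∈ onePlusTwoPow k := by
      apply hone_k2 _ (pow_mem hx 2)
      rw [show x ^ 2 = (-x) ^ 2 from (neg_sq x).symm]
      exact pow_mem hnx2 2
    refine ⟨?_, hnx2⟩
    rw [mem_onePlusTwoPow_iff] at hxsq hnx2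
    have hy2 : ‖((-x : ℤ_[2]ˣ) : ℤ_[2]) - 1‖ ≤ (2:ℝ) ^ (-(2:ℤ)) := by
      convert hnx2 using 2 <;> norm_num
    have hysq : ‖((-x : ℤ_[2]ˣ) : ℤ_[2]) ^ 2 - 1‖ ≤ (2:ℝ) ^ (-(k:ℤ)) := by
      have hval : ((x ^ 2 : ℤ_[2]ˣ) : ℤ_[2]) = ((-x : ℤ_[2]ˣ) : ℤ_[2]) ^ 2 := by
        rw [Units.val_pow_eq_pow_val, Units.val_neg, neg_sq]
      rwa [hval] at hxsq
    have h1 := norm_add_one hy2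
    have key : ‖((-x : ℤ_[2]ˣ) : ℤ_[2]) ^ 2 - 1‖
        = ‖((-x : ℤ_[2]ˣ) : ℤ_[2]) - 1‖ * (2:ℝ) ^ (-(1:ℤ)) := by
      rw [show ((-x : ℤ_[2]ˣ) : ℤ_[2]) ^ 2 - 1
          = (((-x : ℤ_[2]ˣ) : ℤ_[2]) - 1) * (((-x : ℤ_[2]ˣ) : ℤ_[2]) + 1) by ring,
        norm_mul, h1]
    rw [key] at hysq
    have harith : (2:ℝ) ^ (-((k:ℤ) - 1)) = (2:ℝ) ^ (-(k:ℤ)) * 2 := by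
      rw [show -((k:ℤ) - 1) = -(k:ℤ) + 1 by ring,
        zpow_add₀ (by norm_num : (2:ℝ) ≠ 0), zpow_one]
    rw [harith]
    have h2pos : (0:ℝ) < (2:ℝ) ^ (-(1:ℤ)) := by positivity
    calc ‖((-x : ℤ_[2]ˣ) : ℤ_[2]) - 1‖
        = (‖((-x : ℤ_[2]ˣ) : ℤ_[2]) - 1‖ * (2:ℝ) ^ (-(1:ℤ))) * 2 := by
          rw [mul_assoc]; norm_num
      _ ≤ (2:ℝ) ^ (-(k:ℤ)) * 2 := by nlinarith
  by_cases hBg : -g ∈ onePlusTwoPow k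
  · -- H = {±1}(1+2^k)
    right; right
    have hngH : -g ∈ H := honek_le hBg
    have hm1 : (-1 : ℤ_[2]ˣ) ∈ H := by
      have hval : (-g) * g⁻¹ = (-1 : ℤ_[2]ˣ) := by
        rw [neg_mul, mul_inv_cancel]
      rw [← hval]
      exact mul_mem hngH (inv_mem hgH)
    apply le_antisymm
    · intro h hh
      by_cases hh2 : h ∈ onePlusTwoPow 2
      · exact Subgroup.mem_sup_right (hone_k2 _ hh hh2)
      · have hnh : -h ∈ onePlusTwoPow 2 := (unit_mem_or_neg_mem h).resolve_left hh2
        have hnhH : -h ∈ H := by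
          rw [show -h = (-1) * h by rw [neg_one_mul]]
          exact mul_mem hm1 hh
        have hnhk : -h ∈ onePlusTwoPow k := hone_k2 _ hnhH hnh
        rw [show h = (-1) * (-h) by rw [neg_one_mul, neg_neg]]
        exact mul_mem (Subgroup.mem_sup_left (Or.inr rfl)) (Subgroup.mem_sup_right hnhk)
    · apply sup_le _ honek_le
      rintro x (rfl | rfl)
      · exact one_mem H
      · exact hm1
  · -- H = closure of <2^(k-1) - 1>
    right; left
    obtain ⟨hgle, hng2⟩ := hneg_norm g hgH hg2
    have hexact : ∀ x : ℤ_[2]ˣ, -x ∉ onePlusTwoPow k →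
        ‖((-x : ℤ_[2]ˣ) : ℤ_[2]) - 1‖ ≤ (2:ℝ) ^ (-((k:ℤ) - 1)) →
        ‖((-x : ℤ_[2]ˣ) : ℤ_[2]) - 1‖ = (2:ℝ) ^ (-((k:ℤ) - 1)) := by
      intro x hxk hxle
      apply norm_dichotomy hxle
      intro hcon
      apply hxk
      rw [mem_onePlusTwoPow_iff]
      convert hcon using 2 <;> ring
    have hgexact := hexact g hBg hgle
    -- the generator
    have hsnorm : ‖(2:ℤ_[2]) ^ (k-1) - 1‖ = 1 := norm_two_pow_sub_one (by omega)
    obtain ⟨u, hu⟩ := PadicInt.isUnit_iff.mpr hsnorm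
    have h2k1 : ‖(2:ℤ_[2]) ^ (k-1)‖ = (2:ℝ) ^ (-((k:ℤ) - 1)) := by
      rw [norm_two_pow]
      congr 1
      push_cast [Nat.cast_sub (by omega : 1 ≤ k)]
      ring
    -- norm of u^2 - 1
    have hαk : ‖((u : ℤ_[2])) ^ 2 - 1‖ = (2:ℝ) ^ (-(k:ℤ)) := by
      rw [hu]
      have hdecomp : ((2:ℤ_[2]) ^ (k-1) - 1) ^ 2 - 1
          = (2:ℤ_[2]) ^ k * ((2:ℤ_[2]) ^ (k-2) - 1) := by
        have e1 : (2:ℤ_[2]) ^ (k-1) * (2:ℤ_[2]) ^ (k-1) = (2:ℤ_[2]) ^ k * (2:ℤ_[2]) ^ (k-2) := by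
          rw [← pow_add, ← pow_add]
          congr 1
          omega
        have e2 : (2:ℤ_[2]) * (2:ℤ_[2]) ^ (k-1) = (2:ℤ_[2]) ^ k := by
          rw [← pow_succ']
          congr 1
          omega
        calc ((2:ℤ_[2]) ^ (k-1) - 1) ^ 2 - 1
            = (2:ℤ_[2]) ^ (k-1) * (2:ℤ_[2]) ^ (k-1) - (2:ℤ_[2]) * (2:ℤ_[2]) ^ (k-1) := by ring
          _ = (2:ℤ_[2]) ^ k * (2:ℤ_[2]) ^ (k-2) - (2:ℤ_[2]) ^ k := by rw [e1, e2]
          _ = (2:ℤ_[2]) ^ k * ((2:ℤ_[2]) ^ (k-2) - 1) := by ring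
      rw [hdecomp, norm_mul, norm_two_pow, norm_two_pow_sub_one (by omega), mul_one]
    -- distance from a negative element to u
    have hdist : ∀ x : ℤ_[2]ˣ, ‖((-x : ℤ_[2]ˣ) : ℤ_[2]) - 1‖ = (2:ℝ) ^ (-((k:ℤ) - 1)) →
        x * u⁻¹ ∈ onePlusTwoPow k := by
      intro x hxe
      rw [mem_onePlusTwoPow_iff]
      have hval : ((x * u⁻¹ : ℤ_[2]ˣ) : ℤ_[2]) - 1 = ((x : ℤ_[2]) - u) * ((u⁻¹ : ℤ_[2]ˣ) : ℤ_[2]) := by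
        rw [Units.val_mul, sub_mul,
          show (u : ℤ_[2]) * ((u⁻¹ : ℤ_[2]ˣ) : ℤ_[2]) = 1 from u.mul_inv]
      rw [hval, norm_mul, PadicInt.norm_units, mul_one]
      have hsub : (x : ℤ_[2]) - u = -((((-x : ℤ_[2]ˣ) : ℤ_[2]) - 1) + (2:ℤ_[2]) ^ (k-1)) := by
        rw [hu, Units.val_neg]
        ring
      rw [hsub, norm_neg]
      have hhalf := norm_add_le_half (x := ((-x : ℤ_[2]ˣ) : ℤ_[2]) - 1)
        (y := (2:ℤ_[2]) ^ (k-1)) (by rw [hxe, h2k1])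
      rw [hxe] at hhalf
      calc ‖(((-x : ℤ_[2]ˣ) : ℤ_[2]) - 1) + (2:ℤ_[2]) ^ (k-1)‖
          ≤ (2:ℝ) ^ (-((k:ℤ) - 1)) / 2 := hhalf
        _ = (2:ℝ) ^ (-(k:ℤ)) := by
            rw [div_eq_mul_inv, ← zpow_neg_one (2:ℝ), ← zpow_add₀ (by norm_num : (2:ℝ) ≠ 0)]
            congr 1
            ring
    have hwH : g * u⁻¹ ∈ onePlusTwoPow k := hdist g hgexact
    have huH : u ∈ H := by
      have hval : u = (g * u⁻¹)⁻¹ * g := by group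
      rw [hval]
      exact mul_mem (inv_mem (honek_le hwH)) hgH
    refine ⟨u, hu, ?_⟩
    have hck : onePlusTwoPow k ≤ (Subgroup.closure {u}).topologicalClosure := by
      apply onePlusTwoPow_le_closure (α := u ^ 2) (by omega)
      · exact pow_mem (Subgroup.subset_closure (Set.mem_singleton u)) 2
      · rw [Units.val_pow_eq_pow_val]
        exact hαk
    apply le_antisymm
    · intro h hh
      by_cases hh2 : h ∈ onePlusTwoPow 2
      · exact hck (hone_k2 _ hh hh2)
      · obtain ⟨hhle, hnh2⟩ := hneg_norm h hh hh2
        have hnhk : -h ∉ onePlusTwoPow k := by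
          intro hmem
          apply hBg
          have hz : ‖((-h : ℤ_[2]ˣ) : ℤ_[2]) - 1‖ ≤ (2:ℝ) ^ (-(k:ℤ)) :=
            (mem_onePlusTwoPow_iff _ _).mp hmem
          have hgh2 : g * h ∈ onePlusTwoPow 2 := by
            rw [mem_onePlusTwoPow_iff]
            have hyz : ((g * h : ℤ_[2]ˣ) : ℤ_[2]) - 1
                = (((-g : ℤ_[2]ˣ) : ℤ_[2]) - 1) * ((-h : ℤ_[2]ˣ) : ℤ_[2])
                  + (((-h : ℤ_[2]ˣ) : ℤ_[2]) - 1) := by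
              rw [Units.val_mul, Units.val_neg, Units.val_neg]
              ring
            rw [hyz]
            have hb1 : ‖(((-g : ℤ_[2]ˣ) : ℤ_[2]) - 1) * ((-h : ℤ_[2]ˣ) : ℤ_[2])‖
                ≤ (2:ℝ) ^ (-(2:ℤ)) := by
              rw [norm_mul, PadicInt.norm_units, mul_one, hgexact]
              apply zpow_le_zpow_right₀ one_le_two
              omega
            have hb2 : ‖((-h : ℤ_[2]ˣ) : ℤ_[2]) - 1‖ ≤ (2:ℝ) ^ (-(2:ℤ)) := by
              apply hz.trans
              apply zpow_le_zpow_right₀ one_le_two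
              omega
            calc ‖_ + _‖ ≤ max _ _ := PadicInt.nonarchimedean _ _
              _ ≤ (2:ℝ) ^ (-(2:ℤ)) := max_le hb1 hb2
          have hghk : g * h ∈ onePlusTwoPow k := hone_k2 _ (mul_mem hgH hh) hgh2
          have hval : -g = (g * h) * (-h)⁻¹ := by
            rw [← neg_mul_neg g h, mul_inv_cancel_right]
          rw [hval]
          exact mul_mem hghk (inv_mem hmem)
        have hhexact := hexact h hnhk hhle
        have hw2 : h * u⁻¹ ∈ onePlusTwoPow k := hdist h hhexact
        have hval : h = (h * u⁻¹) * u := by group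
        rw [hval]
        exact mul_mem (hck hw2)
          (Subgroup.le_topologicalClosure _ (Subgroup.subset_closure (Set.mem_singleton u)))
    · exact Subgroup.topologicalClosure_minimal _
        ((Subgroup.closure_le H).mpr (Set.singleton_subset_iff.mpr huH)) hH
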